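/- A closed pointed convex cone in a finite-dimensional real vector space is equal to the conic hull of its extreme rays. -/

import Mathlib

set_option synthInstance.maxHeartbeats 1000000
set_option maxHeartbeats 1000000
set_option linter.unusedSectionVars false

open Module Submodule Filter Topology

/-- Conic combinations of at most `k` elements of `S`. -/
def coneComb {E : Type*} [AddCommGroup E] [Module ℝ E] (k : ℕ) (S : Set E) : Set E :=
  {x | ∃ (c : Fin k → ℝ) (f : Fin k → E),
    (∀ i, 0 ≤ c i) ∧ (∀ i, f i ∈ S) ∧ x = ∑ i, c i • f i}

/-- `F` is a face of the convex cone `C`. -/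
def IsFaceOf {E : Type*} [AddCommGroup E] [Module ℝ E] (C F : Set E) : Prop :=
  F ⊆ C ∧ Convex ℝ F ∧ ∀ a ∈ C, ∀ b ∈ C, a + b ∈ F → a ∈ F ∧ b ∈ F

/-- The union of the extreme rays (one-dimensional faces) of `C`. -/
def extremeRayPoints {E : Type*} [AddCommGroup E] [Module ℝ E] (C : Set E) : Set E :=
  {x | ∃ F : Set E, IsFaceOf C F ∧ Module.finrank ℝ (Submodule.span ℝ F) = 1 ∧ x ∈ F}

section Comb

variable {E : Type*} [AddCommGroup E] [Module ℝ E]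

lemma coneComb_mono {k : ℕ} {S T : Set E} (h : S ⊆ T) : coneComb k S ⊆ coneComb k T := by
  rintro x ⟨c, f, hc, hf, rfl⟩
  exact ⟨c, f, hc, fun i => h (hf i), rfl⟩

lemma zero_mem_coneComb (S : Set E) : (0 : E) ∈ coneComb 0 S := by
  refine ⟨Fin.elim0, Fin.elim0, fun i => i.elim0, fun i => i.elim0, by simp⟩

lemma single_mem_coneComb {S : Set E} {x : E} (hx : x ∈ S) : x ∈ coneComb 1 S :=
  ⟨fun _ => 1, fun _ => x, fun _ => zero_le_one, fun _ => hx, by simp⟩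

lemma coneComb_smul {k : ℕ} {S : Set E} {x : E} (hx : x ∈ coneComb k S) {t : ℝ} (ht : 0 ≤ t) :
    t • x ∈ coneComb k S := by
  obtain ⟨c, f, hc, hf, rfl⟩ := hx
  refine ⟨fun i => t * c i, f, fun i => mul_nonneg ht (hc i), hf, ?_⟩
  rw [Finset.smul_sum]
  simp [mul_smul]

lemma coneComb_add {k l : ℕ} {S : Set E} {x y : E} (hx : x ∈ coneComb k S)
    (hy : y ∈ coneComb l S) : x + y ∈ coneComb (k + l) S := by
  obtain ⟨c, f, hc, hf, rfl⟩ := hx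
  obtain ⟨d, g, hd, hg, rfl⟩ := hy
  refine ⟨Fin.append c d, Fin.append f g, ?_, ?_, ?_⟩
  · intro i
    induction i using Fin.addCases with
    | left i => simpa using hc i
    | right i => simpa using hd i
  · intro i
    induction i using Fin.addCases with
    | left i => simpa using hf i
    | right i => simpa using hg i
  · rw [Fin.sum_univ_add]
    simp

lemma extremeRayPoints_mono_face {C F : Set E} (h : IsFaceOf C F) :
    extremeRayPoints F ⊆ extremeRayPoints C := by
  rintro x ⟨G, ⟨hGF, hGc, hGface⟩, hG1, hxG⟩
  refine ⟨G, ⟨hGF.trans h.1, hGc, ?_⟩, hG1, hxG⟩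
  intro a ha b hb hab
  obtain ⟨ha', hb'⟩ := h.2.2 a ha b hb (hGF hab)
  exact hGface a ha' b hb' hab


end Comb

section Analytic

variable {E : Type*} [NormedAddCommGroup E] [NormedSpace ℝ E] [FiniteDimensional ℝ E]

lemma cone_convex {C : Set E}
    (hsmul : ∀ x ∈ C, ∀ c : ℝ, 0 ≤ c → c • x ∈ C)
    (hadd : ∀ x ∈ C, ∀ y ∈ C, x + y ∈ C) : Convex ℝ C := by
  intro a ha b hb s t hs ht _
  exact hadd _ (hsmul a ha s hs) _ (hsmul b hb t ht)

lemma support_exists {C : Set E}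
    (hsmul : ∀ x ∈ C, ∀ c : ℝ, 0 ≤ c → c • x ∈ C)
    (hadd : ∀ x ∈ C, ∀ y ∈ C, x + y ∈ C)
    (hclosed : IsClosed C) (h0 : (0 : E) ∈ C)
    {y : E} (hy : y ∈ C) {z : ℕ → E}
    (hzV : ∀ k, z k ∈ span ℝ C) (hznC : ∀ k, z k ∉ C)
    (hz : Tendsto z atTop (𝓝 y)) :
    ∃ ℓ : E →L[ℝ] ℝ, (∀ a ∈ C, 0 ≤ ℓ a) ∧ ℓ y = 0 ∧ ∃ w ∈ span ℝ C, ℓ w ≠ 0 := by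
  classical
  set V := span ℝ C with hV
  -- separating functionals for each k, flipped to be ≥ 0 on C
  have sep : ∀ k, ∃ f : E →L[ℝ] ℝ, (∀ a ∈ C, 0 ≤ f a) ∧ f (z k) < 0 := by
    intro k
    obtain ⟨f, u, hfC, hfz⟩ :=
      geometric_hahn_banach_closed_point (cone_convex hsmul hadd) hclosed (hznC k)
    have hu : 0 < u := by simpa using hfC 0 h0
    refine ⟨-f, ?_, ?_⟩
    · intro a ha
      simp only [ContinuousLinearMap.neg_apply, Left.nonneg_neg_iff]
      by_contra hfa
      push_neg at hfa
      have h1 : f ((u / f a + 1) • a) < u := hfC _ (hsmul a ha _ (by positivity))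
      rw [map_smul, smul_eq_mul] at h1
      rw [div_add' _ _ _ (ne_of_gt hfa), div_mul_eq_mul_div,
        div_lt_iff₀ hfa] at h1
      nlinarith
    · simp only [ContinuousLinearMap.neg_apply, Left.neg_neg_iff]
      linarith
  choose f hfC hfz using sep
  -- restrict to V and normalize
  set g : ℕ → (V →L[ℝ] ℝ) := fun k => ((f k).comp V.subtypeL) with hg
  have hgz : ∀ k, g k ⟨z k, hzV k⟩ < 0 := fun k => hfz k
  have hgne : ∀ k, g k ≠ 0 := by
    intro k h
    have := hgz k
    rw [h] at this
    simp at this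
  set h : ℕ → (V →L[ℝ] ℝ) := fun k => ‖g k‖⁻¹ • g k with hh
  have hnorm : ∀ k, h k ∈ Metric.sphere (0 : V →L[ℝ] ℝ) 1 := by
    intro k
    have : ‖g k‖ ≠ 0 := fun hn => hgne k ((ContinuousLinearMap.opNorm_zero_iff _).1 hn)
    have h2 : ‖g k‖ ≠ 0 := this
    have le1 : ‖‖g k‖⁻¹ • g k‖ ≤ 1 := by
      calc ‖‖g k‖⁻¹ • g k‖ ≤ ‖(‖g k‖⁻¹)‖ * ‖g k‖ := ContinuousLinearMap.opNorm_smul_le _ _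
      _ = 1 := by rw [Real.norm_of_nonneg (inv_nonneg.2 (ContinuousLinearMap.opNorm_nonneg _)),
        inv_mul_cancel₀ h2]
    have hrec : g k = ‖g k‖ • (‖g k‖⁻¹ • g k) := by rw [smul_smul, mul_inv_cancel₀ h2, one_smul]
    have ge1 : (1:ℝ) ≤ ‖‖g k‖⁻¹ • g k‖ := by
      have hle : ‖g k‖ ≤ ‖g k‖ * ‖‖g k‖⁻¹ • g k‖ := by
        calc ‖g k‖ = ‖‖g k‖ • (‖g k‖⁻¹ • g k)‖ := by rw [← hrec]
        _ ≤ ‖(‖g k‖ : ℝ)‖ * ‖‖g k‖⁻¹ • g k‖ := ContinuousLinearMap.opNorm_smul_le _ _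
        _ = ‖g k‖ * ‖‖g k‖⁻¹ • g k‖ := by
          rw [Real.norm_of_nonneg (ContinuousLinearMap.opNorm_nonneg _)]
      have hpos : 0 < ‖g k‖ := lt_of_le_of_ne (ContinuousLinearMap.opNorm_nonneg _) (Ne.symm h2)
      nlinarith
    have h1 : ‖‖g k‖⁻¹ • g k‖ = 1 := le_antisymm le1 ge1
    have hd := dist_zero_right (‖g k‖⁻¹ • g k)
    exact Metric.mem_sphere.mpr (hd.trans h1)
  haveI : FiniteDimensional ℝ (V →L[ℝ] ℝ) := inferInstance
  haveI : ProperSpace (V →L[ℝ] ℝ) := FiniteDimensional.proper ℝ (V →L[ℝ] ℝ)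
  obtain ⟨L, hL, φ, hφ, hLlim⟩ :=
    (isCompact_sphere (0 : V →L[ℝ] ℝ) 1).tendsto_subseq hnorm
  have happly : ∀ w : V, Tendsto (fun k => h (φ k) w) atTop (𝓝 (L w)) := by
    intro w
    exact ((ContinuousLinearMap.apply ℝ ℝ w).continuous.tendsto L).comp hLlim
  have hhC : ∀ k, ∀ a : V, (a : E) ∈ C → 0 ≤ h k a := by
    intro k a ha
    exact mul_nonneg (by positivity) (hfC k a ha)
  have hLC : ∀ a : V, (a : E) ∈ C → 0 ≤ L a := by
    intro a ha
    exact ge_of_tendsto' (happly a) fun k => hhC (φ k) a ha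
  -- L at y
  have hyV : y ∈ V := subset_span hy
  have hzy : Tendsto (fun k => (⟨z (φ k), hzV (φ k)⟩ : V)) atTop (𝓝 ⟨y, hyV⟩) := by
    rw [tendsto_subtype_rng]
    exact hz.comp hφ.tendsto_atTop
  have hLy : L ⟨y, hyV⟩ ≤ 0 := by
    have key : Tendsto (fun k => h (φ k) ⟨z (φ k), hzV (φ k)⟩) atTop (𝓝 (L ⟨y, hyV⟩)) := by
      have := (isBoundedBilinearMap_apply (𝕜 := ℝ) (E := V) (F := ℝ)).continuous.tendsto
        (L, (⟨y, hyV⟩ : V))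
      exact this.comp (hLlim.prodMk_nhds hzy)
    refine le_of_tendsto key (Eventually.of_forall fun k => ?_)
    have := hgz (φ k)
    have hn : (0:ℝ) < ‖g (φ k)‖⁻¹ := by
      have h2 : ‖g (φ k)‖ ≠ 0 := fun hn => hgne (φ k) ((ContinuousLinearMap.opNorm_zero_iff _).1 hn)
      exact inv_pos.2 (lt_of_le_of_ne (ContinuousLinearMap.opNorm_nonneg _) (Ne.symm h2))
    have : h (φ k) ⟨z (φ k), hzV (φ k)⟩ = ‖g (φ k)‖⁻¹ * g (φ k) ⟨z (φ k), hzV (φ k)⟩ := rfl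
    rw [this]
    nlinarith [hgz (φ k)]
  have hLy0 : L ⟨y, hyV⟩ = 0 := le_antisymm hLy (hLC _ hy)
  -- extend L to E via a projection
  clear hLlim happly hhC hgz hgne hnorm hLy hzy hz
  clear hh h hg g hfC hfz f hzV hznC z
  obtain ⟨q, hq⟩ := Submodule.exists_isCompl V
  set π : E →ₗ[ℝ] V := V.linearProjOfIsCompl q hq with hπ
  set πL : E →L[ℝ] V := LinearMap.toContinuousLinearMap π with hπL
  refine ⟨L.comp πL, ?_, ?_, ?_⟩
  · intro a ha
    have : πL a = ⟨a, subset_span ha⟩ := Submodule.linearProjOfIsCompl_apply_left hq ⟨a, subset_span ha⟩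
    simp only [ContinuousLinearMap.comp_apply, this]
    exact hLC _ ha
  · have : πL y = ⟨y, hyV⟩ := Submodule.linearProjOfIsCompl_apply_left hq ⟨y, hyV⟩
    simp only [ContinuousLinearMap.comp_apply, this, hLy0]
  · have hLnorm : ‖L‖ = 1 := by
      have hd := dist_zero_right L
      rw [Metric.mem_sphere] at hL
      exact hd.symm.trans hL
    have hLne : L ≠ 0 := by
      intro h0'
      rw [h0', ContinuousLinearMap.opNorm_zero] at hLnorm
      exact one_ne_zero hLnorm.symm
    obtain ⟨w, hw⟩ : ∃ w : V, L w ≠ 0 := by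
      by_contra hc
      push_neg at hc
      exact hLne (ContinuousLinearMap.ext fun w => (hc w).trans (ContinuousLinearMap.zero_apply w).symm)
    refine ⟨w, w.2, fun hc => hw ?_⟩
    have hpw : πL (w : E) = w := Submodule.linearProjOfIsCompl_apply_left hq w
    calc L w = L (πL (w : E)) := by rw [hpw]
    _ = 0 := hc

lemma face_of_support {C : Set E}
    (hsmul : ∀ x ∈ C, ∀ c : ℝ, 0 ≤ c → c • x ∈ C)
    (hadd : ∀ x ∈ C, ∀ y ∈ C, x + y ∈ C)
    (hclosed : IsClosed C) (hpointed : C ∩ (-C) = {0}) (h0 : (0 : E) ∈ C)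
    {y : E} (hy : y ∈ C) {z : ℕ → E}
    (hzV : ∀ k, z k ∈ span ℝ C) (hznC : ∀ k, z k ∉ C)
    (hz : Tendsto z atTop (𝓝 y)) :
    ∃ F : Set E, IsFaceOf C F ∧ y ∈ F ∧
      (∀ x ∈ F, ∀ c : ℝ, 0 ≤ c → c • x ∈ F) ∧
      (∀ a ∈ F, ∀ b ∈ F, a + b ∈ F) ∧ IsClosed F ∧ F ∩ (-F) = {0} ∧
      finrank ℝ (span ℝ F) < finrank ℝ (span ℝ C) := by
  obtain ⟨ℓ, hℓC, hℓy, w, hwV, hw⟩ := support_exists hsmul hadd hclosed h0 hy hzV hznC hz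
  set F : Set E := {c | c ∈ C ∧ ℓ c = 0} with hF
  have hFC : F ⊆ C := fun c hc => hc.1
  have hF0 : (0 : E) ∈ F := ⟨h0, map_zero ℓ⟩
  have hFsmul : ∀ x ∈ F, ∀ c : ℝ, 0 ≤ c → c • x ∈ F := by
    rintro x ⟨hxC, hxℓ⟩ c hc
    exact ⟨hsmul x hxC c hc, by rw [map_smul, hxℓ, smul_eq_mul, mul_zero]⟩
  have hFadd : ∀ a ∈ F, ∀ b ∈ F, a + b ∈ F := by
    rintro a ⟨haC, haℓ⟩ b ⟨hbC, hbℓ⟩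
    exact ⟨hadd a haC b hbC, by rw [map_add, haℓ, hbℓ, add_zero]⟩
  have hface : IsFaceOf C F := by
    refine ⟨hFC, ?_, ?_⟩
    · intro p hp q hq s t hs ht hst
      exact hFadd _ (hFsmul p hp s hs) _ (hFsmul q hq t ht)
    · rintro a ha b hb ⟨habC, habℓ⟩
      rw [map_add] at habℓ
      have h1 : ℓ a = 0 := le_antisymm (by linarith [hℓC b hb]) (hℓC a ha)
      have h2 : ℓ b = 0 := by linarith
      exact ⟨⟨ha, h1⟩, ⟨hb, h2⟩⟩
  refine ⟨F, hface, ⟨hy, hℓy⟩, hFsmul, hFadd, ?_, ?_, ?_⟩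
  · have : F = C ∩ ℓ ⁻¹' {0} := by ext c; simp [hF]
    rw [this]
    exact hclosed.inter (isClosed_singleton.preimage ℓ.continuous)
  · apply Set.Subset.antisymm
    · rintro u ⟨hu1, hu2⟩
      have hmem : u ∈ C ∩ (-C) := ⟨hFC hu1, Set.mem_neg.2 (hFC (Set.mem_neg.1 hu2))⟩
      rw [hpointed] at hmem
      exact hmem
    · rintro u (rfl : u = 0)
      exact ⟨hF0, by simpa using hF0⟩
  · have h1 : span ℝ F ≤ span ℝ C := span_mono hFC
    have h2 : span ℝ F ≤ LinearMap.ker (ℓ : E →ₗ[ℝ] ℝ) := by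
      rw [span_le]
      rintro c ⟨_, hcℓ⟩
      exact hcℓ
    have hlt : span ℝ F < span ℝ C := by
      refine lt_of_le_of_ne h1 fun heq => ?_
      have : w ∈ span ℝ F := heq ▸ hwV
      exact hw (h2 this)
    exact Submodule.finrank_lt_finrank_of_lt hlt


end Analytic

section Rest

variable {E : Type*} [NormedAddCommGroup E] [NormedSpace ℝ E] [FiniteDimensional ℝ E]

lemma exists_notin {C : Set E} (hclosed : IsClosed C) (hpointed : C ∩ (-C) = {0})
    (h2 : 2 ≤ finrank ℝ (span ℝ C)) :
    ∃ v : E, v ∈ span ℝ C ∧ v ∉ C ∧ -v ∉ C := by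
  set V := span ℝ C with hV
  have hCne : ∃ x0 : E, x0 ∈ C ∧ x0 ≠ 0 := by
    by_contra hc
    push_neg at hc
    have : C ⊆ {0} := fun x hx => by
      by_cases h : x = 0
      · simp [h]
      · exact absurd (hc x hx) h
    have : V ≤ span ℝ {(0 : E)} := span_mono this
    rw [span_zero_singleton] at this
    have : finrank ℝ V = 0 := by
      rw [le_bot_iff] at this
      rw [this]
      exact finrank_bot ℝ E
    omega
  obtain ⟨x0, hx0C, hx0⟩ := hCne
  by_contra hc
  push_neg at hc
  -- every v in V is in C or -C
  have hcover : ∀ v : E, v ∈ V → v ∈ C ∨ -v ∈ C := by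
    intro v hv
    by_cases h1 : v ∈ C
    · exact Or.inl h1
    · exact Or.inr (not_not.1 fun h2' => h2' (hc v hv h1))
  -- work in the subtype V
  set A : Set V := Subtype.val ⁻¹' C with hA
  set B : Set V := (fun w : V => -(w : E)) ⁻¹' C with hB
  have hAclosed : IsClosed A := hclosed.preimage continuous_subtype_val
  have hBclosed : IsClosed B := hclosed.preimage continuous_subtype_val.neg
  have hAB : ∀ w : V, w ∈ A → w ∈ B → w = 0 := by
    intro w hwA hwB
    have : (w : E) ∈ C ∩ (-C) := ⟨hwA, Set.mem_neg.2 hwB⟩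
    rw [hpointed] at this
    exact Subtype.ext this
  have hunion : (Set.univ : Set V) ⊆ A ∪ B := by
    intro w _
    rcases hcover w w.2 with h | h
    · exact Or.inl h
    · exact Or.inr h
  have hx0V : x0 ∈ V := subset_span hx0C
  have hx0A : (⟨x0, hx0V⟩ : V) ∈ A := hx0C
  have hx0nB : (⟨x0, hx0V⟩ : V) ∉ B := by
    intro h
    exact hx0 (congrArg Subtype.val (hAB _ hx0A h))
  have hx0B : (⟨-x0, neg_mem hx0V⟩ : V) ∈ B := by
    show -(-x0) ∈ C
    rwa [neg_neg]
  have hx0nA : (⟨-x0, neg_mem hx0V⟩ : V) ∉ A := by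
    intro h
    apply hx0
    have := hAB _ h hx0B
    have := congrArg Subtype.val this
    simpa [neg_eq_zero] using this
  -- connectivity of V \ {0}
  have hrank : 1 < Module.rank ℝ V := by
    have : (2 : Cardinal) ≤ Module.rank ℝ V := by
      rw [← finrank_eq_rank]
      exact_mod_cast h2
    exact lt_of_lt_of_le (by norm_num) this
  have hconn : IsPreconnected ({(0 : V)}ᶜ : Set V) :=
    (isConnected_compl_singleton_of_one_lt_rank hrank 0).isPreconnected
  have h0ne : (⟨x0, hx0V⟩ : V) ≠ 0 := fun h => hx0 (congrArg Subtype.val h)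
  have h0ne' : (⟨-x0, neg_mem hx0V⟩ : V) ≠ 0 := fun h => by
    apply hx0
    have := congrArg Subtype.val h
    simpa [neg_eq_zero] using this
  obtain ⟨w, hw⟩ := hconn Bᶜ Aᶜ hBclosed.isOpen_compl hAclosed.isOpen_compl
    (by
      intro w hw
      by_cases h : w ∈ A
      · left
        intro hB'
        exact hw (hAB w h hB')
      · right
        exact h)
    ⟨⟨x0, hx0V⟩, h0ne, hx0nB⟩ ⟨⟨-x0, neg_mem hx0V⟩, h0ne', hx0nA⟩
  exact hw.2.2 ((hunion (Set.mem_univ w)).resolve_right hw.2.1)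

lemma bddAbove_line {C : Set E}
    (hsmul : ∀ x ∈ C, ∀ c : ℝ, 0 ≤ c → c • x ∈ C)
    (hadd : ∀ x ∈ C, ∀ y ∈ C, x + y ∈ C)
    (hclosed : IsClosed C) {x v : E} (hx : x ∈ C) (hv : v ∉ C) :
    BddAbove {t : ℝ | x + t • v ∈ C} := by
  by_contra hb
  rw [not_bddAbove_iff] at hb
  have key : ∀ t : ℝ, 0 ≤ t → x + t • v ∈ C := by
    intro t ht
    obtain ⟨s, hsT, hst⟩ := hb (max t 0)
    have hs0 : 0 < s := lt_of_le_of_lt (le_max_right t 0) hst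
    have hts : t < s := lt_of_le_of_lt (le_max_left t 0) hst
    have h1 : (1 - t / s) • x + (t / s) • (x + s • v) = x + t • v := by
      rw [smul_add, smul_smul]
      rw [div_mul_cancel₀ _ (ne_of_gt hs0)]
      rw [sub_smul, one_smul]
      abel
    rw [← h1]
    have ha : (1 - t / s) • x ∈ C := hsmul x hx _ (by
      have : t / s ≤ 1 := (div_le_one hs0).2 (le_of_lt hts)
      linarith)
    have hb' : (t / s) • (x + s • v) ∈ C := hsmul _ hsT _ (div_nonneg ht (le_of_lt hs0))
    exact hadd _ ha _ hb'
  apply hv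
  have hseq : ∀ n : ℕ, ((n : ℝ) + 1)⁻¹ • x + v ∈ C := by
    intro n
    have h1 : x + ((n : ℝ) + 1) • v ∈ C := key _ (by positivity)
    have h2 := hsmul _ h1 ((n : ℝ) + 1)⁻¹ (by positivity)
    rwa [smul_add, smul_smul, inv_mul_cancel₀ (by positivity), one_smul] at h2
  have htend : Tendsto (fun n : ℕ => ((n : ℝ) + 1)⁻¹ • x + v) atTop (𝓝 v) := by
    have h0 : Tendsto (fun n : ℕ => ((n : ℝ) + 1)⁻¹) atTop (𝓝 0) := by
      simpa [one_div] using tendsto_one_div_add_atTop_nhds_zero_nat (𝕜 := ℝ)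
    have h1 : Tendsto (fun n : ℕ => ((n : ℝ) + 1)⁻¹ • x) atTop (𝓝 (0 : E)) := by
      simpa using h0.smul_const x
    simpa using h1.add tendsto_const_nhds
  exact hclosed.mem_of_tendsto htend (Eventually.of_forall hseq)

lemma sum_mem_cone {C : Set E}
    (hadd : ∀ x ∈ C, ∀ y ∈ C, x + y ∈ C) (h0 : (0 : E) ∈ C) :
    ∀ (k : ℕ) (g : Fin k → E), (∀ i, g i ∈ C) → ∑ i, g i ∈ C := by
  intro k
  induction k with
  | zero => intro g _; simpa using h0
  | succ m IH =>
    intro g hg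
    rw [Fin.sum_univ_succ]
    exact hadd _ (hg 0) _ (IH _ fun i => hg i.succ)

lemma main_induction (n : ℕ) : ∀ C : Set E,
    (∀ x ∈ C, ∀ c : ℝ, 0 ≤ c → c • x ∈ C) →
    (∀ x ∈ C, ∀ y ∈ C, x + y ∈ C) →
    IsClosed C → C ∩ (-C) = {0} → finrank ℝ (span ℝ C) ≤ n →
    C ⊆ ⋃ k : ℕ, coneComb k (extremeRayPoints C) := by
  induction n with
  | zero =>
    intro C hsmul hadd hclosed hpointed hrank x hx
    have hbot : span ℝ C = ⊥ := by
      rw [Nat.le_zero] at hrank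
      exact Submodule.finrank_eq_zero.1 hrank
    have hx0 : x = 0 := by
      have := subset_span (R := ℝ) hx
      rw [hbot] at this
      exact (Submodule.mem_bot ℝ).1 this
    subst hx0
    exact Set.mem_iUnion.2 ⟨0, zero_mem_coneComb _⟩
  | succ n IH =>
    intro C hsmul hadd hclosed hpointed hrank x hx
    have h0C : (0 : E) ∈ C := by
      have : (0 : E) ∈ C ∩ (-C) := by rw [hpointed]; rfl
      exact this.1
    rcases Nat.lt_or_ge (finrank ℝ (span ℝ C)) (n + 1) with hlt | hge
    · exact IH C hsmul hadd hclosed hpointed (Nat.lt_succ_iff.1 hlt) hx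
    have heq : finrank ℝ (span ℝ C) = n + 1 := le_antisymm hrank hge
    by_cases hx0 : x = 0
    · subst hx0
      exact Set.mem_iUnion.2 ⟨0, zero_mem_coneComb _⟩
    rcases Nat.eq_zero_or_pos n with hn0 | hnpos
    · -- dimension 1 : C itself is an extreme ray containing x
      subst hn0
      have hface : IsFaceOf C C :=
        ⟨subset_rfl, cone_convex hsmul hadd, fun a ha b hb _ => ⟨ha, hb⟩⟩
      have : x ∈ extremeRayPoints C := ⟨C, hface, heq, hx⟩
      exact Set.mem_iUnion.2 ⟨1, single_mem_coneComb this⟩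
    -- dimension ≥ 2
    have h2 : 2 ≤ finrank ℝ (span ℝ C) := by omega
    obtain ⟨v, hvV, hvnC, hvnC'⟩ := exists_notin hclosed hpointed h2
    set T : Set ℝ := {t : ℝ | x + t • v ∈ C} with hT
    have hT0 : (0 : ℝ) ∈ T := by
      show x + (0 : ℝ) • v ∈ C
      rw [zero_smul, add_zero]
      exact hx
    have hTA : BddAbove T := bddAbove_line hsmul hadd hclosed hx hvnC
    have hTB : BddBelow T := by
      have hA' : BddAbove {t : ℝ | x + t • (-v) ∈ C} :=
        bddAbove_line hsmul hadd hclosed hx hvnC'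
      have hsub : T ⊆ -{t : ℝ | x + t • (-v) ∈ C} := by
        intro t ht
        show x + (-t) • (-v) ∈ C
        rwa [smul_neg, neg_smul, neg_neg]
      exact BddBelow.mono hsub hA'.neg
    have hTclosed : IsClosed T := by
      have hcont : Continuous fun t : ℝ => x + t • v :=
        continuous_const.add (continuous_id.smul continuous_const)
      exact hclosed.preimage hcont
    set b := sSup T with hb
    set a := sInf T with ha
    have hbT : b ∈ T := hTclosed.csSup_mem ⟨0, hT0⟩ hTA
    have haT : a ∈ T := hTclosed.csInf_mem ⟨0, hT0⟩ hTB
    have hb0 : 0 ≤ b := le_csSup hTA hT0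
    have ha0 : a ≤ 0 := csInf_le hTB hT0
    have hVx : x ∈ span ℝ C := subset_span hx
    -- the two boundary points
    have hy2mem : x + b • v ∈ ⋃ k : ℕ, coneComb k (extremeRayPoints C) := by
      set z : ℕ → E := fun k => x + (b + 1 / ((k : ℝ) + 1)) • v with hzdef
      have hznC : ∀ k, z k ∉ C := by
        intro k hk
        have h1 : b + 1 / ((k : ℝ) + 1) ≤ b := le_csSup hTA hk
        have h2 : (0 : ℝ) < 1 / ((k : ℝ) + 1) := by positivity
        linarith
      have hzV : ∀ k, z k ∈ span ℝ C := fun k => add_mem hVx (smul_mem _ _ hvV)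
      have hztend : Tendsto z atTop (𝓝 (x + b • v)) := by
        have h0 : Tendsto (fun k : ℕ => b + 1 / ((k : ℝ) + 1)) atTop (𝓝 b) := by
          have h1 := tendsto_one_div_add_atTop_nhds_zero_nat (𝕜 := ℝ)
          simpa using tendsto_const_nhds.add h1
        exact tendsto_const_nhds.add (h0.smul_const v)
      obtain ⟨F, hFface, hyF, hFsmul, hFadd, hFclosed, hFpointed, hFrank⟩ :=
        face_of_support hsmul hadd hclosed hpointed h0C hbT hzV hznC hztend
      have hle : finrank ℝ (span ℝ F) ≤ n := by
        rw [heq] at hFrank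
        omega
      have hsub := IH F hFsmul hFadd hFclosed hFpointed hle hyF
      obtain ⟨s, ⟨k, rfl⟩, hk⟩ := hsub
      exact Set.mem_iUnion.2 ⟨k, coneComb_mono (extremeRayPoints_mono_face hFface) hk⟩
    have hy1mem : x + a • v ∈ ⋃ k : ℕ, coneComb k (extremeRayPoints C) := by
      set z : ℕ → E := fun k => x + (a - 1 / ((k : ℝ) + 1)) • v with hzdef
      have hznC : ∀ k, z k ∉ C := by
        intro k hk
        have h1 : a ≤ a - 1 / ((k : ℝ) + 1) := csInf_le hTB hk
        have h2 : (0 : ℝ) < 1 / ((k : ℝ) + 1) := by positivity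
        linarith
      have hzV : ∀ k, z k ∈ span ℝ C := fun k => add_mem hVx (smul_mem _ _ hvV)
      have hztend : Tendsto z atTop (𝓝 (x + a • v)) := by
        have h0 : Tendsto (fun k : ℕ => a - 1 / ((k : ℝ) + 1)) atTop (𝓝 a) := by
          have h1 := tendsto_one_div_add_atTop_nhds_zero_nat (𝕜 := ℝ)
          simpa using tendsto_const_nhds.sub h1
        exact tendsto_const_nhds.add (h0.smul_const v)
      obtain ⟨F, hFface, hyF, hFsmul, hFadd, hFclosed, hFpointed, hFrank⟩ :=
        face_of_support hsmul hadd hclosed hpointed h0C haT hzV hznC hztend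
      have hle : finrank ℝ (span ℝ F) ≤ n := by
        rw [heq] at hFrank
        omega
      have hsub := IH F hFsmul hFadd hFclosed hFpointed hle hyF
      obtain ⟨s, ⟨k, rfl⟩, hk⟩ := hsub
      exact Set.mem_iUnion.2 ⟨k, coneComb_mono (extremeRayPoints_mono_face hFface) hk⟩
    by_cases hab : a = b
    · have ha0' : a = 0 := le_antisymm ha0 (hab ▸ hb0)
      have hxeq : x = x + b • v := by
        rw [← hab, ha0', zero_smul, add_zero]
      rw [hxeq]
      exact hy2mem
    · have hd : 0 < b - a := by
        have : a < b := lt_of_le_of_ne (ha0.trans hb0) hab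
        linarith
      obtain ⟨s1, ⟨k1, rfl⟩, hk1⟩ := hy1mem
      obtain ⟨s2, ⟨k2, rfl⟩, hk2⟩ := hy2mem
      have hcomb : (b / (b - a)) • (x + a • v) + (-a / (b - a)) • (x + b • v) = x := by
        have hne : b - a ≠ 0 := ne_of_gt hd
        match_scalars
        · field_simp
          ring
        · field_simp
          ring
      refine Set.mem_iUnion.2 ⟨k1 + k2, ?_⟩
      rw [← hcomb]
      exact coneComb_add (coneComb_smul hk1 (div_nonneg hb0 hd.le))
        (coneComb_smul hk2 (div_nonneg (neg_nonneg.2 ha0) hd.le))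

end Rest

/-- A closed pointed convex cone in a finite-dimensional real vector space is the conic hull
of its extreme rays. -/
theorem stmt_3 {E : Type*} [NormedAddCommGroup E] [NormedSpace ℝ E] [FiniteDimensional ℝ E]
    (C : Set E)
    (hsmul : ∀ x ∈ C, ∀ c : ℝ, 0 ≤ c → c • x ∈ C)
    (hadd : ∀ x ∈ C, ∀ y ∈ C, x + y ∈ C)
    (hclosed : IsClosed C) (hpointed : C ∩ (-C) = {0}) :
    C = ⋃ k : ℕ, coneComb k (extremeRayPoints C) := by
  apply Set.Subset.antisymm
  · exact main_induction (finrank ℝ (Submodule.span ℝ C)) C hsmul hadd hclosed hpointed le_rfl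
  · intro x hx
    obtain ⟨s, ⟨k, rfl⟩, hk⟩ := hx
    obtain ⟨c, f, hc, hf, rfl⟩ := hk
    have h0C : (0 : E) ∈ C := by
      have : (0 : E) ∈ C ∩ (-C) := by rw [hpointed]; rfl
      exact this.1
    apply sum_mem_cone hadd h0C
    intro i
    obtain ⟨F, hFface, _, hxF⟩ := hf i
    exact hsmul _ (hFface.1 hxF) _ (hc i)
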